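/- Let γ > 1, M_η > 0, M_D > 0, set M* = 4 M_η M_D · max{2(γ−1)/γ, (4/γ)·(3γ−1)/(γ+1)} and λ = (1/(4M_η))·((γ+1)/(3γ−1))·M*, and let M ≥ M*. Then for all real numbers α, η, μ with M/2 ≤ α ≤ M, 0 < η ≤ M_η and |μ| ≤ M_D, the following hold: (i) α − λη + (2(γ−1)/γ) η μ > 0; (ii) (λ − (4/γ)μ)(α − λη) ≥ 0; (iii) 0 < α − ((3γ−1)/(γ+1)) λη + ((γ−1)/(γ(γ+1))) η μ ≤ (5/4) M. -/

import Mathlib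

noncomputable section

open Real Set MeasureTheory
open scoped ENNReal

/-- The time domain `[0, T)`, where `T ∈ (0, ∞]` may be infinite. -/
def Tset (T : ℝ≥0∞) : Set ℝ := {t : ℝ | 0 ≤ t ∧ ENNReal.ofReal t < T}

/-- `m(x) = exp (S x / (2 c_v))`. -/
def mFun (cv : ℝ) (S : ℝ → ℝ) (x : ℝ) : ℝ := Real.exp (S x / (2 * cv))

/-- `η = (2√(Kγ)/(γ−1)) τ^{−(γ−1)/2}`. -/
def etaFun (K γ : ℝ) (τ : ℝ → ℝ → ℝ) (x t : ℝ) : ℝ :=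
  2 * Real.sqrt (K * γ) / (γ - 1) * τ x t ^ (-(γ - 1) / 2)

/-- pressure `p = K e^{S/c_v} τ^{−γ}`. -/
def pFun (K cv γ : ℝ) (S : ℝ → ℝ) (τ : ℝ → ℝ → ℝ) (x t : ℝ) : ℝ :=
  K * Real.exp (S x / cv) * τ x t ^ (-γ)

/-- `K_τ = (2√(Kγ)/(γ−1))^{2/(γ−1)}`. -/
def Ktau (K γ : ℝ) : ℝ := (2 * Real.sqrt (K * γ) / (γ - 1)) ^ (2 / (γ - 1))

/-- `K_c = √(Kγ) K_τ^{−(γ+1)/2}`. -/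
def KcConst (K γ : ℝ) : ℝ := Real.sqrt (K * γ) * Ktau K γ ^ (-(γ + 1) / 2)

/-- wave speed `c = K_c m η^{(γ+1)/(γ−1)}`. -/
def cFun (K cv γ : ℝ) (S : ℝ → ℝ) (τ : ℝ → ℝ → ℝ) (x t : ℝ) : ℝ :=
  KcConst K γ * mFun cv S x * etaFun K γ τ x t ^ ((γ + 1) / (γ - 1))

/-- gradient variable `α̃ = u_x + m η_x + ((γ−1)/γ) m_x η`. -/
def alphaT (K cv γ : ℝ) (S : ℝ → ℝ) (u τ : ℝ → ℝ → ℝ) (x t : ℝ) : ℝ :=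
  deriv (fun x' => u x' t) x + mFun cv S x * deriv (fun x' => etaFun K γ τ x' t) x
    + (γ - 1) / γ * deriv (mFun cv S) x * etaFun K γ τ x t

/-- gradient variable `β̃ = u_x − m η_x − ((γ−1)/γ) m_x η`. -/
def betaT (K cv γ : ℝ) (S : ℝ → ℝ) (u τ : ℝ → ℝ → ℝ) (x t : ℝ) : ℝ :=
  deriv (fun x' => u x' t) x - mFun cv S x * deriv (fun x' => etaFun K γ τ x' t) x
    - (γ - 1) / γ * deriv (mFun cv S) x * etaFun K γ τ x t

/-- A classical solution of the compressible Euler equations on `ℝ × [0,T)`: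
`τ > 0`, `τ_t = u_x` and `u_t = −p_x` pointwise (the entropy `S = S(x)` is
time-independent by fiat, which encodes `S_t = 0`). -/
def IsEulerSol (K cv γ : ℝ) (T : ℝ≥0∞) (u τ : ℝ → ℝ → ℝ) (S : ℝ → ℝ) : Prop :=
  (∀ x : ℝ, ∀ t ∈ Tset T, 0 < τ x t) ∧
  (∀ x : ℝ, ∀ t ∈ Tset T,
    HasDerivWithinAt (fun t' => τ x t') (deriv (fun x' => u x' t) x) (Tset T) t) ∧
  (∀ x : ℝ, ∀ t ∈ Tset T,
    HasDerivWithinAt (fun t' => u x t')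
      (-(deriv (fun x' => pFun K cv γ S τ x' t) x)) (Tset T) t)

/-- `C^k` regularity of the solution on `ℝ × [0,T)`. -/
def IsCkSol (k : ℕ) (T : ℝ≥0∞) (u τ : ℝ → ℝ → ℝ) (S : ℝ → ℝ) : Prop :=
  ContDiffOn ℝ k (fun q : ℝ × ℝ => u q.1 q.2) ((Set.univ : Set ℝ) ×ˢ Tset T) ∧
  ContDiffOn ℝ k (fun q : ℝ × ℝ => τ q.1 q.2) ((Set.univ : Set ℝ) ×ˢ Tset T) ∧
  ContDiff ℝ k S

/-- `M* = 4 M_η M_D · max{2(γ−1)/γ, ((3γ−1)/(γ+1))·(4/γ)}`. -/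
def Mstar (γ Mη MD : ℝ) : ℝ :=
  4 * Mη * MD * max (2 * (γ - 1) / γ) ((3 * γ - 1) / (γ + 1) * (4 / γ))

/-- `λ = (1/(4M_η))·((γ+1)/(3γ−1))·M*`. -/
def lamConst (γ Mη MD : ℝ) : ℝ :=
  1 / (4 * Mη) * ((γ + 1) / (3 * γ - 1)) * Mstar γ Mη MD

/-- transformed gradient variable `α = α̃ + λ η`. -/
def alphaV (K cv γ lam : ℝ) (S : ℝ → ℝ) (u τ : ℝ → ℝ → ℝ) (x t : ℝ) : ℝ :=
  alphaT K cv γ S u τ x t + lam * etaFun K γ τ x t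

/-- transformed gradient variable `β = β̃ + λ η`. -/
def betaV (K cv γ lam : ℝ) (S : ℝ → ℝ) (u τ : ℝ → ℝ → ℝ) (x t : ℝ) : ℝ :=
  betaT K cv γ S u τ x t + lam * etaFun K γ τ x t

set_option maxHeartbeats 1000000 in
/-- inequalities (4.5)–(4.6): for `γ > 1`, `M_η, M_D > 0`,
`M ≥ M*`, `λ` as defined, and any `α ∈ [M/2, M]`, `η ∈ (0, M_η]`, `|μ| ≤ M_D`:
(i) `α − λη + (2(γ−1)/γ) ημ > 0`; (ii) `(λ − (4/γ)μ)(α − λη) ≥ 0`;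
(iii) `0 < α − ((3γ−1)/(γ+1)) λη + ((γ−1)/(γ(γ+1))) ημ ≤ (5/4)M`. -/
theorem pointwise_sign_inequalities
    (γ Mη MD : ℝ) (hγ : 1 < γ) (hMη : 0 < Mη) (hMD : 0 < MD)
    (M : ℝ) (hM : Mstar γ Mη MD ≤ M) :
    ∀ α η μ : ℝ, M / 2 ≤ α → α ≤ M → 0 < η → η ≤ Mη → |μ| ≤ MD →
      (0 < α - lamConst γ Mη MD * η + 2 * (γ - 1) / γ * η * μ) ∧
      (0 ≤ (lamConst γ Mη MD - 4 / γ * μ) * (α - lamConst γ Mη MD * η)) ∧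
      (0 < α - (3 * γ - 1) / (γ + 1) * lamConst γ Mη MD * η
            + (γ - 1) / (γ * (γ + 1)) * η * μ ∧
        α - (3 * γ - 1) / (γ + 1) * lamConst γ Mη MD * η
            + (γ - 1) / (γ * (γ + 1)) * η * μ ≤ 5 / 4 * M) := by
  intro α η μ hα1 hα2 hη hηMη hμ
  have hγ0 : (0:ℝ) < γ := by linarith
  have hγ1 : (0:ℝ) < γ - 1 := by linarith
  have h3γ : (0:ℝ) < 3 * γ - 1 := by linarith
  have hγp : (0:ℝ) < γ + 1 := by linarith
  set A : ℝ := 2 * (γ - 1) / γ with hAdef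
  set B : ℝ := (3 * γ - 1) / (γ + 1) * (4 / γ) with hBdef
  set mx : ℝ := max A B with hmxdef
  have hA : 0 < A := by positivity
  have hB : 0 < B := by positivity
  have hAmx : A ≤ mx := le_max_left _ _
  have hBmx : B ≤ mx := le_max_right _ _
  have hmx : 0 < mx := lt_of_lt_of_le hA hAmx
  have hMs : Mstar γ Mη MD = 4 * Mη * MD * mx := by rw [Mstar]
  have hMs0 : 0 < Mstar γ Mη MD := by rw [hMs]; positivity
  have hM0 : 0 < M := lt_of_lt_of_le hMs0 hM
  set L : ℝ := lamConst γ Mη MD with hLdef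
  have hLeq : L = MD * ((γ + 1) / (3 * γ - 1)) * mx := by
    rw [hLdef, lamConst, hMs]
    field_simp
  have hL0 : 0 < L := by rw [hLeq]; positivity
  -- L * Mη < Ms / 4
  have hfrac : (γ + 1) / (3 * γ - 1) < 1 := by
    rw [div_lt_one h3γ]; linarith
  have hLMη : L * Mη < Mstar γ Mη MD / 4 := by
    rw [hLeq, hMs]
    have h1 : MD * ((γ + 1) / (3 * γ - 1)) * mx * Mη < MD * 1 * mx * Mη := by
      apply mul_lt_mul_of_pos_right _ hMη
      apply mul_lt_mul_of_pos_right _ hmx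
      exact mul_lt_mul_of_pos_left hfrac hMD
    nlinarith
  have hLη : L * η ≤ L * Mη := mul_le_mul_of_nonneg_left hηMη (le_of_lt hL0)
  have hLηM : L * η < M / 4 := by linarith
  -- C := (3γ-1)/(γ+1) * L ;  C * Mη = Ms / 4
  have hCMη : (3 * γ - 1) / (γ + 1) * L * Mη = Mstar γ Mη MD / 4 := by
    rw [hLeq, hMs]
    field_simp
  have hC0 : 0 < (3 * γ - 1) / (γ + 1) * L := by positivity
  have hCη : (3 * γ - 1) / (γ + 1) * L * η ≤ M / 4 := by
    have := mul_le_mul_of_nonneg_left hηMη (le_of_lt hC0)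
    linarith [hCMη]
  have hCηpos : 0 < (3 * γ - 1) / (γ + 1) * L * η := by positivity
  -- bounds on η * μ
  have hμ1 : -MD ≤ μ := (abs_le.mp hμ).1
  have hμ2 : μ ≤ MD := (abs_le.mp hμ).2
  have hημ : |η * μ| ≤ Mη * MD := by
    rw [abs_mul, abs_of_pos hη]
    exact mul_le_mul hηMη hμ (abs_nonneg μ) (le_of_lt hMη)
  have hημ1 : -(Mη * MD) ≤ η * μ := (abs_le.mp hημ).1
  have hημ2 : η * μ ≤ Mη * MD := (abs_le.mp hημ).2
  -- A * MηMD ≤ Ms/4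
  have hAMs : A * (Mη * MD) ≤ Mstar γ Mη MD / 4 := by
    rw [hMs]
    nlinarith [mul_le_mul_of_nonneg_right hAmx (le_of_lt (mul_pos hMη hMD))]
  have hAημ : -(M / 4) ≤ A * (η * μ) := by
    have h1 : A * -(Mη * MD) ≤ A * (η * μ) := mul_le_mul_of_nonneg_left hημ1 (le_of_lt hA)
    have h2 : A * -(Mη * MD) = -(A * (Mη * MD)) := by ring
    linarith
  refine ⟨?_, ?_, ?_, ?_⟩
  · -- (i)
    have : A * η * μ = A * (η * μ) := by ring
    rw [this]
    linarith
  · -- (ii)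
    have hL4 : 4 / γ * MD ≤ L := by
      have h1 : MD * ((γ + 1) / (3 * γ - 1)) * B ≤ MD * ((γ + 1) / (3 * γ - 1)) * mx := by
        apply mul_le_mul_of_nonneg_left hBmx
        positivity
      have h2 : MD * ((γ + 1) / (3 * γ - 1)) * B = 4 / γ * MD := by
        rw [hBdef]; field_simp [h3γ.ne']; exact div_self (by linarith)
      rw [hLeq]; linarith
    have hf1 : 0 ≤ L - 4 / γ * μ := by
      have : 4 / γ * μ ≤ 4 / γ * MD :=
        mul_le_mul_of_nonneg_left hμ2 (by positivity)
      linarith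
    have hf2 : 0 ≤ α - L * η := by linarith
    exact mul_nonneg hf1 hf2
  · -- (iii) lower
    set D : ℝ := (γ - 1) / (γ * (γ + 1)) with hDdef
    have hD0 : 0 < D := by positivity
    have hDA : D ≤ A / 4 := by
      have hA4 : A / 4 = (γ - 1) / (2 * γ) := by rw [hAdef]; ring
      rw [hDdef, hA4]
      refine div_le_div_of_nonneg_left (by linarith) (by positivity) ?_
      have h := mul_le_mul_of_nonneg_left (show (2:ℝ) ≤ γ + 1 by linarith) hγ0.le
      linarith
    have hDημ : -(M / 16) ≤ D * (η * μ) := by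
      have h1 : D * -(Mη * MD) ≤ D * (η * μ) := mul_le_mul_of_nonneg_left hημ1 (le_of_lt hD0)
      have h2 : D * (Mη * MD) ≤ A / 4 * (Mη * MD) :=
        mul_le_mul_of_nonneg_right hDA (le_of_lt (mul_pos hMη hMD))
      nlinarith
    have : D * η * μ = D * (η * μ) := by ring
    rw [this]
    linarith
  · -- (iii) upper
    set D : ℝ := (γ - 1) / (γ * (γ + 1)) with hDdef
    have hD0 : 0 < D := by positivity
    have hDA : D ≤ A / 4 := by
      have hA4 : A / 4 = (γ - 1) / (2 * γ) := by rw [hAdef]; ring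
      rw [hDdef, hA4]
      refine div_le_div_of_nonneg_left (by linarith) (by positivity) ?_
      have h := mul_le_mul_of_nonneg_left (show (2:ℝ) ≤ γ + 1 by linarith) hγ0.le
      linarith
    have hDημ : D * (η * μ) ≤ M / 16 := by
      have h2 : D * (Mη * MD) ≤ A / 4 * (Mη * MD) :=
        mul_le_mul_of_nonneg_right hDA (le_of_lt (mul_pos hMη hMD))
      have h1 : D * (η * μ) ≤ D * (Mη * MD) := mul_le_mul_of_nonneg_left hημ2 (le_of_lt hD0)
      nlinarith
    have : D * η * μ = D * (η * μ) := by ring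
    rw [this]
    linarith
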